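/- Let μ > 1 and h < 0. If ξ¹, ξ² : ℝ² → ℝ are real-analytic functions satisfying the Killing system for the metric g = (2/(x²+y²−2h)²)·diag(1, 1/μ) on all of ℝ², then ξ¹ and ξ² are both identically zero. In particular, the metric g admits no nonzero real-analytic Killing vector field on ℝ². -/

import Mathlib

/-- Partial derivative in the first variable of a curried function `ℝ → ℝ → ℝ`. -/
noncomputable def pdx (f : ℝ → ℝ → ℝ) : ℝ → ℝ → ℝ :=
  fun x y => deriv (fun x' => f x' y) x

/-- Partial derivative in the second variable of a curried function `ℝ → ℝ → ℝ`. -/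
noncomputable def pdy (f : ℝ → ℝ → ℝ) : ℝ → ℝ → ℝ :=
  fun x y => deriv (fun y' => f x y') y

/-- The Killing system for the metric `g = (2/(x²+y²−2h)²)·diag(1, 1/μ)` on `ℝ²`:
(i) `∂ᵧξ¹ + (1/μ)∂ₓξ² = 0`;
(ii) `−4(xξ¹ + yξ²)/(x²+y²−2h) + 2∂ₓξ¹ = 0`;
(iii) `−4(xξ¹ + yξ²)/(x²+y²−2h) + 2∂ᵧξ² = 0`. -/
def KillingSystem (μ h : ℝ) (ξ1 ξ2 : ℝ → ℝ → ℝ) : Prop :=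
  ∀ x y : ℝ,
    pdy ξ1 x y + (1 / μ) * pdx ξ2 x y = 0 ∧
    -4 * (x * ξ1 x y + y * ξ2 x y) / (x ^ 2 + y ^ 2 - 2 * h) + 2 * pdx ξ1 x y = 0 ∧
    -4 * (x * ξ1 x y + y * ξ2 x y) / (x ^ 2 + y ^ 2 - 2 * h) + 2 * pdy ξ2 x y = 0

lemma my_topsucc : (⊤ : WithTop ℕ∞) + 1 ≤ (⊤ : WithTop ℕ∞) := le_top

lemma my_one_le : (1 : WithTop ℕ∞) ≤ (⊤ : WithTop ℕ∞) := le_top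

lemma my_hasDerivAt_fst {F : ℝ × ℝ → ℝ} (hF : Differentiable ℝ F) (x y : ℝ) :
    HasDerivAt (fun t => F (t, y)) (fderiv ℝ F (x, y) (1, 0)) x :=
  (hF (x, y)).hasFDerivAt.comp_hasDerivAt x ((hasDerivAt_id x).prodMk (hasDerivAt_const x y))

lemma my_hasDerivAt_snd {F : ℝ × ℝ → ℝ} (hF : Differentiable ℝ F) (x y : ℝ) :
    HasDerivAt (fun t => F (x, t)) (fderiv ℝ F (x, y) (0, 1)) y :=
  (hF (x, y)).hasFDerivAt.comp_hasDerivAt y ((hasDerivAt_const y x).prodMk (hasDerivAt_id y))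

lemma my_clairaut {F : ℝ × ℝ → ℝ} (hF : ContDiff ℝ (⊤ : WithTop ℕ∞) F) (p : ℝ × ℝ)
    (v w : ℝ × ℝ) :
    fderiv ℝ (fun q => fderiv ℝ F q v) p w = fderiv ℝ (fun q => fderiv ℝ F q w) p v := by
  have hd : DifferentiableAt ℝ (fderiv ℝ F) p :=
    ((hF.fderiv_right my_topsucc).differentiable (by simp)) p
  have hsym : IsSymmSndFDerivAt ℝ F p := by
    exact hF.contDiffAt.isSymmSndFDerivAt le_top
  have e : ∀ v : ℝ × ℝ, fderiv ℝ (fun q => fderiv ℝ F q v) p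
      = (fderiv ℝ (fderiv ℝ F) p).flip v := by
    intro v
    have := fderiv_clm_apply (c := fderiv ℝ F) (u := fun _ => v) hd (differentiableAt_const v)
    simpa using this
  rw [e v, e w]
  simp only [ContinuousLinearMap.flip_apply]
  exact hsym w v

lemma my_keyx {f : ℝ → ℝ → ℝ}
    (hf : ContDiff ℝ (⊤ : WithTop ℕ∞) (fun p : ℝ × ℝ => f p.1 p.2)) (x y : ℝ) :
    HasDerivAt (fun t => f t y) (pdx f x y) x := by
  have h := my_hasDerivAt_fst (hf.differentiable (by simp)) x y
  have hdiff : DifferentiableAt ℝ (fun t => f t y) x := h.differentiableAt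
  exact hdiff.hasDerivAt

lemma my_keyy {f : ℝ → ℝ → ℝ}
    (hf : ContDiff ℝ (⊤ : WithTop ℕ∞) (fun p : ℝ × ℝ => f p.1 p.2)) (x y : ℝ) :
    HasDerivAt (fun t => f x t) (pdy f x y) y := by
  have h := my_hasDerivAt_snd (hf.differentiable (by simp)) x y
  have hdiff : DifferentiableAt ℝ (fun t => f x t) y := h.differentiableAt
  exact hdiff.hasDerivAt

lemma my_pdxf {f : ℝ → ℝ → ℝ}
    (hf : ContDiff ℝ (⊤ : WithTop ℕ∞) (fun p : ℝ × ℝ => f p.1 p.2)) (x y : ℝ) :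
    fderiv ℝ (fun p : ℝ × ℝ => f p.1 p.2) (x, y) (1, 0) = pdx f x y :=
  ((my_keyx hf x y).unique (my_hasDerivAt_fst (hf.differentiable (by simp)) x y)).symm

lemma my_pdyf {f : ℝ → ℝ → ℝ}
    (hf : ContDiff ℝ (⊤ : WithTop ℕ∞) (fun p : ℝ × ℝ => f p.1 p.2)) (x y : ℝ) :
    fderiv ℝ (fun p : ℝ × ℝ => f p.1 p.2) (x, y) (0, 1) = pdy f x y :=
  ((my_keyy hf x y).unique (my_hasDerivAt_snd (hf.differentiable (by simp)) x y)).symm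

lemma my_lim {f : ℝ → ℝ} (hf : Continuous f) (h0 : ∀ t, t ≠ 0 → f t = 0) : f 0 = 0 := by
  have h1 : Filter.Tendsto f (nhdsWithin 0 {(0:ℝ)}ᶜ) (nhds (f 0)) :=
    (hf.tendsto 0).mono_left nhdsWithin_le_nhds
  have h2 : Filter.Tendsto f (nhdsWithin 0 {(0:ℝ)}ᶜ) (nhds 0) := by
    apply Filter.Tendsto.congr' _ tendsto_const_nhds
    filter_upwards [self_mem_nhdsWithin] with t ht
    simp only [Set.mem_compl_iff, Set.mem_singleton_iff] at ht
    exact (h0 t ht).symm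
  exact tendsto_nhds_unique h1 h2

set_option maxHeartbeats 1000000 in
/-- **The metric `g = (2/(x²+y²−2h)²)·diag(1, 1/μ)` with `μ > 1` and `h < 0`
admits no nonzero real-analytic Killing vector field on `ℝ²`:** any
real-analytic solution `(ξ¹, ξ²)` of the Killing system vanishes identically. -/
theorem no_nonzero_analytic_killing_field
    (μ h : ℝ) (hμ : 1 < μ) (hh : h < 0)
    (ξ1 ξ2 : ℝ → ℝ → ℝ)
    (hξ1 : ∀ p : ℝ × ℝ, AnalyticAt ℝ (fun q : ℝ × ℝ => ξ1 q.1 q.2) p)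
    (hξ2 : ∀ p : ℝ × ℝ, AnalyticAt ℝ (fun q : ℝ × ℝ => ξ2 q.1 q.2) p)
    (hK : KillingSystem μ h ξ1 ξ2) :
    ∀ x y : ℝ, ξ1 x y = 0 ∧ ξ2 x y = 0 := by
  have hμ0 : μ ≠ 0 := by linarith
  have hdne : ∀ x y : ℝ, x ^ 2 + y ^ 2 - 2 * h ≠ 0 := by
    intro x y
    nlinarith [sq_nonneg x, sq_nonneg y]
  have hF1 : ContDiff ℝ (⊤ : WithTop ℕ∞) (fun p : ℝ × ℝ => ξ1 p.1 p.2) :=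
    contDiff_iff_contDiffAt.mpr fun p => (hξ1 p).contDiffAt
  have hF2 : ContDiff ℝ (⊤ : WithTop ℕ∞) (fun p : ℝ × ℝ => ξ2 p.1 p.2) :=
    contDiff_iff_contDiffAt.mpr fun p => (hξ2 p).contDiffAt
  -- the auxiliary function W = ∂ₓ ξ2, jointly smooth
  obtain ⟨W, hWfd, hWsm⟩ : ∃ W : ℝ → ℝ → ℝ,
      (∀ x y : ℝ, fderiv ℝ (fun p : ℝ × ℝ => ξ2 p.1 p.2) (x, y) (1, 0) = W x y) ∧
      ContDiff ℝ (⊤ : WithTop ℕ∞) (fun p : ℝ × ℝ => W p.1 p.2) :=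
    ⟨fun x y => fderiv ℝ (fun p : ℝ × ℝ => ξ2 p.1 p.2) (x, y) (1, 0), fun _ _ => rfl,
      (hF2.fderiv_right my_topsucc).clm_apply contDiff_const⟩
  have hWpdx : ∀ x y : ℝ, pdx ξ2 x y = W x y := by
    intro x y
    rw [← my_pdxf hF2 x y, hWfd]
  -- killing equations in solved form
  have K1 : ∀ x y : ℝ, pdy ξ1 x y = -(1/μ) * W x y := by
    intro x y
    rw [← hWpdx]
    linear_combination (hK x y).1
  have K2 : ∀ x y : ℝ, pdx ξ1 x y = 2*(x*ξ1 x y + y*ξ2 x y)/(x^2+y^2-2*h) := by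
    intro x y
    linear_combination (hK x y).2.1 / 2
  have K3 : ∀ x y : ℝ, pdy ξ2 x y = 2*(x*ξ1 x y + y*ξ2 x y)/(x^2+y^2-2*h) := by
    intro x y
    linear_combination (hK x y).2.2 / 2
  -- one-variable derivative facts
  have H1x : ∀ x y : ℝ,
      HasDerivAt (fun t => ξ1 t y) (2*(x*ξ1 x y + y*ξ2 x y)/(x^2+y^2-2*h)) x := by
    intro x y
    have := my_keyx hF1 x y
    rwa [K2 x y] at this
  have H1y : ∀ x y : ℝ, HasDerivAt (fun t => ξ1 x t) (-(1/μ) * W x y) y := by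
    intro x y
    have := my_keyy hF1 x y
    rwa [K1 x y] at this
  have H2x : ∀ x y : ℝ, HasDerivAt (fun t => ξ2 t y) (W x y) x := by
    intro x y
    have := my_keyx hF2 x y
    rwa [hWpdx x y] at this
  have H2y : ∀ x y : ℝ,
      HasDerivAt (fun t => ξ2 x t) (2*(x*ξ1 x y + y*ξ2 x y)/(x^2+y^2-2*h)) y := by
    intro x y
    have := my_keyy hF2 x y
    rwa [K3 x y] at this
  have HWx : ∀ x y : ℝ, HasDerivAt (fun t => W t y) (pdx W x y) x :=
    fun x y => my_keyx hWsm x y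
  have HWy : ∀ x y : ℝ, HasDerivAt (fun t => W x t) (pdy W x y) y :=
    fun x y => my_keyy hWsm x y
  -- derivatives of denominators
  have hdenx : ∀ x y : ℝ, HasDerivAt (fun t : ℝ => t^2+y^2-2*h) (2*x) x := by
    intro x y
    have h := ((hasDerivAt_pow 2 x).add (hasDerivAt_const x (y^2))).sub (hasDerivAt_const x (2*h))
    simpa using hasDerivAt_pow 2 x
  have hdeny : ∀ x y : ℝ, HasDerivAt (fun t : ℝ => x^2+t^2-2*h) (2*y) y := by
    intro x y
    have h := ((hasDerivAt_const y (x^2)).add (hasDerivAt_pow 2 y)).sub (hasDerivAt_const y (2*h))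
    simpa using hasDerivAt_pow 2 y
  -- smoothness of auxiliary uncurried expressions
  have hdC : ContDiff ℝ (⊤ : WithTop ℕ∞) (fun q : ℝ × ℝ => q.1^2+q.2^2-2*h) :=
    ((contDiff_fst.pow 2).add (contDiff_snd.pow 2)).sub contDiff_const
  have hGc : ContDiff ℝ (⊤ : WithTop ℕ∞)
      (fun q : ℝ × ℝ => 2*(q.1*ξ1 q.1 q.2 + q.2*ξ2 q.1 q.2)/(q.1^2+q.2^2-2*h)) :=
    (contDiff_const.mul ((contDiff_fst.mul hF1).add (contDiff_snd.mul hF2))).div hdC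
      (fun q => hdne q.1 q.2)
  -- R1 : pdx W = (2xW - 2μξ2)/d
  have R1 : ∀ x y : ℝ, pdx W x y = (2*x*W x y - 2*μ*ξ2 x y)/(x^2+y^2-2*h) := by
    intro x y
    have hcl := my_clairaut hF1 (x, y) (1, 0) (0, 1)
    have e1 : (fun q : ℝ × ℝ => fderiv ℝ (fun p : ℝ × ℝ => ξ1 p.1 p.2) q (1, 0))
        = fun q : ℝ × ℝ => 2*(q.1*ξ1 q.1 q.2 + q.2*ξ2 q.1 q.2)/(q.1^2+q.2^2-2*h) :=
      funext fun q => (my_pdxf hF1 q.1 q.2).trans (K2 q.1 q.2)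
    have e2 : (fun q : ℝ × ℝ => fderiv ℝ (fun p : ℝ × ℝ => ξ1 p.1 p.2) q (0, 1))
        = fun q : ℝ × ℝ => -(1/μ) * W q.1 q.2 :=
      funext fun q => (my_pdyf hF1 q.1 q.2).trans (K1 q.1 q.2)
    rw [e1, e2] at hcl
    have hL : HasDerivAt (fun t => 2*(x*ξ1 x t + t*ξ2 x t)/(x^2+t^2-2*h))
        (fderiv ℝ (fun q : ℝ × ℝ => 2*(q.1*ξ1 q.1 q.2 + q.2*ξ2 q.1 q.2)/(q.1^2+q.2^2-2*h))
          (x, y) (0, 1)) y :=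
      my_hasDerivAt_snd (hGc.differentiable (by simp)) x y
    have hA : HasDerivAt (fun t => 2*(x*ξ1 x t + t*ξ2 x t)/(x^2+t^2-2*h))
        ((2 * (x * (-(1/μ) * W x y) + (1 * ξ2 x y +
            y * (2*(x*ξ1 x y + y*ξ2 x y)/(x^2+y^2-2*h)))) * (x^2+y^2-2*h)
          - 2*(x*ξ1 x y + y*ξ2 x y) * (2*y)) / (x^2+y^2-2*h)^2) y :=
      ((((H1y x y).const_mul x).add ((hasDerivAt_id y).mul (H2y x y))).const_mul 2).div
        (hdeny x y) (hdne x y)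
    rw [← hA.unique hL] at hcl
    have hR : HasDerivAt (fun t => -(1/μ) * W t y)
        (fderiv ℝ (fun q : ℝ × ℝ => -(1/μ) * W q.1 q.2) (x, y) (1, 0)) x :=
      my_hasDerivAt_fst ((contDiff_const.mul hWsm).differentiable (by simp)) x y
    have hB : HasDerivAt (fun t => -(1/μ) * W t y) (-(1/μ) * pdx W x y) x :=
      (HWx x y).const_mul (-(1/μ))
    rw [← hB.unique hR] at hcl
    have hg : pdx W x y = -μ * ((2 * (x * (-(1/μ) * W x y) + (1 * ξ2 x y +
            y * (2*(x*ξ1 x y + y*ξ2 x y)/(x^2+y^2-2*h)))) * (x^2+y^2-2*h)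
          - 2*(x*ξ1 x y + y*ξ2 x y) * (2*y)) / (x^2+y^2-2*h)^2) := by
      rw [hcl]
      field_simp
    rw [hg]
    field_simp [hdne x y, hμ0]
    ring
  -- R2 : pdy W = (2ξ1 + 2yW)/d
  have R2 : ∀ x y : ℝ, pdy W x y = (2*ξ1 x y + 2*y*W x y)/(x^2+y^2-2*h) := by
    intro x y
    have hcl := my_clairaut hF2 (x, y) (0, 1) (1, 0)
    have e1 : (fun q : ℝ × ℝ => fderiv ℝ (fun p : ℝ × ℝ => ξ2 p.1 p.2) q (0, 1))
        = fun q : ℝ × ℝ => 2*(q.1*ξ1 q.1 q.2 + q.2*ξ2 q.1 q.2)/(q.1^2+q.2^2-2*h) :=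
      funext fun q => (my_pdyf hF2 q.1 q.2).trans (K3 q.1 q.2)
    have e2 : (fun q : ℝ × ℝ => fderiv ℝ (fun p : ℝ × ℝ => ξ2 p.1 p.2) q (1, 0))
        = fun q : ℝ × ℝ => W q.1 q.2 :=
      funext fun q => hWfd q.1 q.2
    rw [e1, e2] at hcl
    rw [my_pdyf hWsm x y] at hcl
    have hL : HasDerivAt (fun t => 2*(t*ξ1 t y + y*ξ2 t y)/(t^2+y^2-2*h))
        (fderiv ℝ (fun q : ℝ × ℝ => 2*(q.1*ξ1 q.1 q.2 + q.2*ξ2 q.1 q.2)/(q.1^2+q.2^2-2*h))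
          (x, y) (1, 0)) x :=
      my_hasDerivAt_fst (hGc.differentiable (by simp)) x y
    have hA : HasDerivAt (fun t => 2*(t*ξ1 t y + y*ξ2 t y)/(t^2+y^2-2*h))
        ((2 * ((1 * ξ1 x y + x * (2*(x*ξ1 x y + y*ξ2 x y)/(x^2+y^2-2*h))) + y * W x y)
            * (x^2+y^2-2*h)
          - 2*(x*ξ1 x y + y*ξ2 x y) * (2*x)) / (x^2+y^2-2*h)^2) x :=
      ((((hasDerivAt_id x).mul (H1x x y)).add ((H2x x y).const_mul y)).const_mul 2).div
        (hdenx x y) (hdne x y)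
    rw [← hA.unique hL] at hcl
    rw [hcl.symm]
    field_simp [hdne x y]
    ring
  -- R3 : x ξ1 = y ξ2 everywhere
  have R3 : ∀ x y : ℝ, x * ξ1 x y = y * ξ2 x y := by
    intro x y
    have hGL : ContDiff ℝ (⊤ : WithTop ℕ∞)
        (fun q : ℝ × ℝ => (2*q.1*W q.1 q.2 - 2*μ*ξ2 q.1 q.2)/(q.1^2+q.2^2-2*h)) :=
      (((contDiff_const.mul contDiff_fst).mul hWsm).sub (contDiff_const.mul hF2)).div hdC
        (fun q => hdne q.1 q.2)
    have hGR : ContDiff ℝ (⊤ : WithTop ℕ∞)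
        (fun q : ℝ × ℝ => (2*ξ1 q.1 q.2 + 2*q.2*W q.1 q.2)/(q.1^2+q.2^2-2*h)) :=
      ((contDiff_const.mul hF1).add ((contDiff_const.mul contDiff_snd).mul hWsm)).div hdC
        (fun q => hdne q.1 q.2)
    have hcl := my_clairaut hWsm (x, y) (1, 0) (0, 1)
    have e1 : (fun q : ℝ × ℝ => fderiv ℝ (fun p : ℝ × ℝ => W p.1 p.2) q (1, 0))
        = fun q : ℝ × ℝ => (2*q.1*W q.1 q.2 - 2*μ*ξ2 q.1 q.2)/(q.1^2+q.2^2-2*h) :=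
      funext fun q => (my_pdxf hWsm q.1 q.2).trans (R1 q.1 q.2)
    have e2 : (fun q : ℝ × ℝ => fderiv ℝ (fun p : ℝ × ℝ => W p.1 p.2) q (0, 1))
        = fun q : ℝ × ℝ => (2*ξ1 q.1 q.2 + 2*q.2*W q.1 q.2)/(q.1^2+q.2^2-2*h) :=
      funext fun q => (my_pdyf hWsm q.1 q.2).trans (R2 q.1 q.2)
    rw [e1, e2] at hcl
    have HWy' : HasDerivAt (fun t => W x t) ((2*ξ1 x y + 2*y*W x y)/(x^2+y^2-2*h)) y := by
      have := HWy x y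
      rwa [R2 x y] at this
    have HWx' : HasDerivAt (fun t => W t y) ((2*x*W x y - 2*μ*ξ2 x y)/(x^2+y^2-2*h)) x := by
      have := HWx x y
      rwa [R1 x y] at this
    have hL : HasDerivAt (fun t => (2*x*W x t - 2*μ*ξ2 x t)/(x^2+t^2-2*h))
        (fderiv ℝ (fun q : ℝ × ℝ => (2*q.1*W q.1 q.2 - 2*μ*ξ2 q.1 q.2)/(q.1^2+q.2^2-2*h))
          (x, y) (0, 1)) y :=
      my_hasDerivAt_snd (hGL.differentiable (by simp)) x y
    have hA : HasDerivAt (fun t => (2*x*W x t - 2*μ*ξ2 x t)/(x^2+t^2-2*h))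
        (((2*x * ((2*ξ1 x y + 2*y*W x y)/(x^2+y^2-2*h))
             - 2*μ * (2*(x*ξ1 x y + y*ξ2 x y)/(x^2+y^2-2*h))) * (x^2+y^2-2*h)
          - (2*x*W x y - 2*μ*ξ2 x y) * (2*y)) / (x^2+y^2-2*h)^2) y :=
      ((HWy'.const_mul (2*x)).sub ((H2y x y).const_mul (2*μ))).div (hdeny x y) (hdne x y)
    rw [← hA.unique hL] at hcl
    have hR : HasDerivAt (fun t => (2*ξ1 t y + 2*y*W t y)/(t^2+y^2-2*h))
        (fderiv ℝ (fun q : ℝ × ℝ => (2*ξ1 q.1 q.2 + 2*q.2*W q.1 q.2)/(q.1^2+q.2^2-2*h))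
          (x, y) (1, 0)) x :=
      my_hasDerivAt_fst (hGR.differentiable (by simp)) x y
    have hB : HasDerivAt (fun t => (2*ξ1 t y + 2*y*W t y)/(t^2+y^2-2*h))
        (((2 * (2*(x*ξ1 x y + y*ξ2 x y)/(x^2+y^2-2*h))
             + 2*y * ((2*x*W x y - 2*μ*ξ2 x y)/(x^2+y^2-2*h))) * (x^2+y^2-2*h)
          - (2*ξ1 x y + 2*y*W x y) * (2*x)) / (x^2+y^2-2*h)^2) x :=
      (((H1x x y).const_mul 2).add (HWx'.const_mul (2*y))).div (hdenx x y) (hdne x y)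
    rw [← hB.unique hR] at hcl
    have h0 : (4-4*μ)*(x*ξ1 x y - y*ξ2 x y)/(x^2+y^2-2*h)^2 = 0 := by
      have hid : (4-4*μ)*(x*ξ1 x y - y*ξ2 x y)/(x^2+y^2-2*h)^2 =
          (((2*x * ((2*ξ1 x y + 2*y*W x y)/(x^2+y^2-2*h))
             - 2*μ * (2*(x*ξ1 x y + y*ξ2 x y)/(x^2+y^2-2*h))) * (x^2+y^2-2*h)
          - (2*x*W x y - 2*μ*ξ2 x y) * (2*y)) / (x^2+y^2-2*h)^2)
          - (((2 * (2*(x*ξ1 x y + y*ξ2 x y)/(x^2+y^2-2*h))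
             + 2*y * ((2*x*W x y - 2*μ*ξ2 x y)/(x^2+y^2-2*h))) * (x^2+y^2-2*h)
          - (2*ξ1 x y + 2*y*W x y) * (2*x)) / (x^2+y^2-2*h)^2) := by
        field_simp [hdne x y, hμ0]
        ring
      rw [hid, hcl, sub_self]
    rcases div_eq_zero_iff.mp h0 with hnum | hden
    · rcases mul_eq_zero.mp hnum with hc | hc
      · nlinarith
      · linarith [hc]
    · exact absurd hden (pow_ne_zero 2 (hdne x y))
  -- E1 : differentiating R3 in x
  have E1 : ∀ x y : ℝ,
      ξ1 x y + 2*x*(x*ξ1 x y + y*ξ2 x y)/(x^2+y^2-2*h) = y * W x y := by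
    intro x y
    have hfun : (fun t : ℝ => t*ξ1 t y) = fun t => y*ξ2 t y := funext fun t => R3 t y
    have hA : HasDerivAt (fun t : ℝ => t*ξ1 t y)
        (1 * ξ1 x y + x * (2*(x*ξ1 x y + y*ξ2 x y)/(x^2+y^2-2*h))) x :=
      (hasDerivAt_id x).mul (H1x x y)
    have hB : HasDerivAt (fun t : ℝ => t*ξ1 t y) (y * W x y) x := by
      rw [hfun]
      exact (H2x x y).const_mul y
    linear_combination hA.unique hB
  -- main computation : ξ1 vanishes away from x = 0
  have hXne : ∀ x y : ℝ, x ≠ 0 → ξ1 x y = 0 := by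
    intro x y hx
    have HWx' : HasDerivAt (fun t => W t y) ((2*x*W x y - 2*μ*ξ2 x y)/(x^2+y^2-2*h)) x := by
      have := HWx x y
      rwa [R1 x y] at this
    have hfun : (fun t : ℝ => ξ1 t y + 2*t*(t*ξ1 t y + y*ξ2 t y)/(t^2+y^2-2*h))
        = fun t => y * W t y := funext fun t => E1 t y
    have h2t : HasDerivAt (fun t : ℝ => 2*t) 2 x := by
      simpa using (hasDerivAt_id x).const_mul 2
    have hA : HasDerivAt (fun t : ℝ => ξ1 t y + 2*t*(t*ξ1 t y + y*ξ2 t y)/(t^2+y^2-2*h))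
        (2*(x*ξ1 x y + y*ξ2 x y)/(x^2+y^2-2*h) +
          ((2 * (x*ξ1 x y + y*ξ2 x y) + 2*x * (1 * ξ1 x y +
              x * (2*(x*ξ1 x y + y*ξ2 x y)/(x^2+y^2-2*h)) + y * W x y)) * (x^2+y^2-2*h)
            - 2*x*(x*ξ1 x y + y*ξ2 x y) * (2*x)) / (x^2+y^2-2*h)^2) x :=
      (H1x x y).add ((h2t.mul (((hasDerivAt_id x).mul (H1x x y)).add
        ((H2x x y).const_mul y))).div (hdenx x y) (hdne x y))
    have hB : HasDerivAt (fun t : ℝ => ξ1 t y + 2*t*(t*ξ1 t y + y*ξ2 t y)/(t^2+y^2-2*h))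
        (y * ((2*x*W x y - 2*μ*ξ2 x y)/(x^2+y^2-2*h))) x := by
      rw [hfun]
      exact HWx'.const_mul y
    have hval := hA.unique hB
    have h0 : (4*(x*ξ1 x y + y*ξ2 x y) + 2*(x*ξ1 x y) + 2*μ*(y*ξ2 x y))/(x^2+y^2-2*h) = 0 := by
      have hid : (4*(x*ξ1 x y + y*ξ2 x y) + 2*(x*ξ1 x y) + 2*μ*(y*ξ2 x y))/(x^2+y^2-2*h) =
          (2*(x*ξ1 x y + y*ξ2 x y)/(x^2+y^2-2*h) +
          ((2 * (x*ξ1 x y + y*ξ2 x y) + 2*x * (1 * ξ1 x y +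
              x * (2*(x*ξ1 x y + y*ξ2 x y)/(x^2+y^2-2*h)) + y * W x y)) * (x^2+y^2-2*h)
            - 2*x*(x*ξ1 x y + y*ξ2 x y) * (2*x)) / (x^2+y^2-2*h)^2)
          - (y * ((2*x*W x y - 2*μ*ξ2 x y)/(x^2+y^2-2*h))) := by
        field_simp [hdne x y, hμ0]
        ring
      rw [hid, hval, sub_self]
    rcases div_eq_zero_iff.mp h0 with hnum | hden
    · have hprod : (10+2*μ)*(x*ξ1 x y) = 0 := by
        linear_combination hnum + (4+2*μ)*(R3 x y)
      have h10 : (10+2*μ) ≠ 0 := ne_of_gt (by nlinarith)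
      have hxa : x*ξ1 x y = 0 := by
        rcases mul_eq_zero.mp hprod with hc | hc
        · exact absurd hc h10
        · exact hc
      rcases mul_eq_zero.mp hxa with hc | hc
      · exact absurd hc hx
      · exact hc
    · exact absurd hden (hdne x y)
  -- ξ1 vanishes everywhere by continuity
  have hz1 : ∀ x y : ℝ, ξ1 x y = 0 := by
    intro x y
    rcases eq_or_ne x 0 with rfl | hx
    · exact my_lim (f := fun t => ξ1 t y)
        (hF1.continuous.comp (continuous_id.prodMk continuous_const))
        (fun t ht => hXne t y ht)
    · exact hXne x y hx
  -- ξ2 vanishes everywhere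
  have hYne : ∀ x y : ℝ, y ≠ 0 → ξ2 x y = 0 := by
    intro x y hy
    have h0 : y * ξ2 x y = 0 := by
      have hr := R3 x y
      rw [hz1 x y] at hr
      simpa using hr.symm
    rcases mul_eq_zero.mp h0 with hc | hc
    · exact absurd hc hy
    · exact hc
  have hz2 : ∀ x y : ℝ, ξ2 x y = 0 := by
    intro x y
    rcases eq_or_ne y 0 with rfl | hy
    · exact my_lim (f := fun t => ξ2 x t)
        (hF2.continuous.comp (continuous_const.prodMk continuous_id))
        (fun t ht => hYne x t ht)
    · exact hYne x y hy
  exact fun x y => ⟨hz1 x y, hz2 x y⟩
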